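/- If H is a subgroup of P = ∏_{n∈ℕ} ℤ of countably infinite rank, then there exist a group endomorphism f of P and positive integers (d_n)_{n∈ℕ} such that f(H) contains the subgroup ⊕_n d_n ℤ of S = ⊕_{n∈ℕ} ℤ (the set of finitely supported sequences x with d_n dividing x(n) for all n). -/

import Mathlib

open Finset

lemma exists_orth (j : ℕ) (M : ℕ → ℕ → ℤ)
    (htri : ∀ i k, k ≤ j → i < k → M i k = 0)
    (hdiag : ∀ k, k ≤ j → M k k ≠ 0) :
    ∃ b : ℕ → ℤ, b j ≠ 0 ∧ ∀ k < j, ∑ i ∈ Finset.range (j+1), b i * M i k = 0 := by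
  classical
  set jf : Fin (j+1) := ⟨j, Nat.lt_succ_self j⟩ with hjf
  set mv : Fin j → (Fin (j+1) → ℚ) := fun k i => (M (i : ℕ) (k : ℕ) : ℚ) with hmv
  set W : Submodule ℚ (Fin (j+1) → ℚ) := Submodule.span ℚ (Set.range mv) with hW
  set v : Fin (j+1) → ℚ := fun i => if jf = i then 1 else 0 with hv
  -- v ∉ W
  have hvW : v ∉ W := by
    intro hmem
    rw [hW, Submodule.mem_span_range_iff_exists_fun] at hmem
    obtain ⟨c, hc⟩ := hmem
    have hc0 : ∀ t : ℕ, ∀ k : Fin j, (k : ℕ) = t → c k = 0 := by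
      intro t
      induction t using Nat.strong_induction_on with
      | _ t ih =>
        intro k hk
        set kc : Fin (j+1) := ⟨(k : ℕ), k.isLt.trans (Nat.lt_succ_self j)⟩ with hkc
        have hrow := congrFun hc kc
        have hvk : v kc = 0 := by
          rw [hv]; simp only [ite_eq_right_iff]
          intro h; exfalso
          have : j = (k:ℕ) := congrArg Fin.val h
          omega
        rw [Finset.sum_apply, hvk] at hrow
        have hterm : ∀ s : Fin j, s ≠ k → (c s • mv s) kc = 0 := by
          intro s hs
          rcases lt_or_gt_of_ne (fun h => hs (Fin.ext h) : (s:ℕ) ≠ (k:ℕ)) with h | h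
          · have : c s = 0 := ih (s:ℕ) (hk ▸ h) s rfl
            simp [this]
          · have hz : M (k:ℕ) (s:ℕ) = 0 := htri _ _ (le_of_lt s.isLt) h
            simp [hmv, hkc, hz]
        rw [Finset.sum_eq_single k (fun s _ hs => hterm s hs) (by simp)] at hrow
        have hMk : ((M (k:ℕ) (k:ℕ) : ℚ)) ≠ 0 := by
          exact_mod_cast hdiag _ (le_of_lt k.isLt)
        have : c k * (M (k:ℕ) (k:ℕ) : ℚ) = 0 := by
          simpa [hmv, Pi.smul_apply, smul_eq_mul] using hrow
        exact (mul_eq_zero.mp this).resolve_right hMk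
    have hrowj := congrFun hc jf
    have hvj : v jf = 1 := by simp [hv]
    rw [Finset.sum_apply, hvj] at hrowj
    have : (0 : ℚ) = 1 := by
      rw [← hrowj]
      refine (Finset.sum_eq_zero ?_).symm
      intro s _
      have hcs : c s = 0 := hc0 (s:ℕ) s rfl
      simp [hcs]
    norm_num at this
  -- build functional
  set π := W.mkQ with hπ
  have hπv : π v ≠ 0 := by
    rw [hπ, Submodule.mkQ_apply, ne_eq, Submodule.Quotient.mk_eq_zero]
    exact hvW
  obtain ⟨φ, hφ⟩ : ∃ φ : Module.Dual ℚ ((Fin (j+1) → ℚ) ⧸ W), φ (π v) ≠ 0 := by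
    by_contra hcon
    push_neg at hcon
    exact hπv ((Module.forall_dual_apply_eq_zero_iff ℚ _).mp hcon)
  set ψ : (Fin (j+1) → ℚ) →ₗ[ℚ] ℚ := φ.comp π with hψdef
  set a : Fin (j+1) → ℚ := fun i => ψ (fun i' => if i = i' then 1 else 0) with ha
  have hψ : ∀ x : Fin (j+1) → ℚ, ψ x = ∑ i, x i * a i := by
    intro x
    conv_lhs => rw [pi_eq_sum_univ x]
    rw [map_sum]
    refine Finset.sum_congr rfl fun i _ => ?_
    rw [map_smul, smul_eq_mul, ha]
  have hψv : ψ v ≠ 0 := hφ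
  -- denominators
  set D : ℕ := ∏ i : Fin (j+1), (a i).den with hD
  have hDpos : 0 < D := Finset.prod_pos fun i _ => (a i).pos
  have hint : ∀ i : Fin (j+1), ∃ z : ℤ, (z : ℚ) = a i * D := by
    intro i
    obtain ⟨c, hc⟩ : ((a i).den : ℕ) ∣ D := Finset.dvd_prod_of_mem _ (Finset.mem_univ i)
    refine ⟨(a i).num * c, ?_⟩
    push_cast [hc]
    rw [← mul_assoc, Rat.mul_den_eq_num]
  choose z hz using hint
  refine ⟨fun i => if h : i < j + 1 then z ⟨i, h⟩ else 0, ?_, ?_⟩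
  · simp only [Nat.lt_succ_self j, dif_pos]
    intro h0
    have h1 : ((z ⟨j, Nat.lt_succ_self j⟩ : ℤ) : ℚ) = 0 := by rw [h0]; norm_num
    rw [hz] at h1
    rcases mul_eq_zero.mp h1 with h | h
    · refine hψv ?_
      have : a jf = ψ v := by
        rw [ha, hv]
      rw [← this]
      exact h
    · have : (D:ℚ) ≠ 0 := Nat.cast_ne_zero.mpr hDpos.ne'
      exact this h
  · intro k hk
    have hmem : mv ⟨k, hk⟩ ∈ W := Submodule.subset_span (Set.mem_range_self _)
    have hcol : ψ (mv ⟨k, hk⟩) = 0 := by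
      rw [hψdef]
      simp only [LinearMap.comp_apply, hπ, Submodule.mkQ_apply]
      rw [(Submodule.Quotient.mk_eq_zero W).mpr hmem, map_zero]
    have hcol' : ∑ i : Fin (j+1), (M (i:ℕ) k : ℚ) * a i = 0 := by
      rw [← hcol, hψ (mv ⟨k, hk⟩)]
    have hcast : ((∑ i ∈ Finset.range (j+1),
        (if h : i < j + 1 then z ⟨i, h⟩ else 0) * M i k : ℤ) : ℚ) = 0 := by
      push_cast
      rw [Finset.sum_range (fun i => ((if h : (i:ℕ) < j + 1 then z ⟨i, h⟩ else 0 : ℤ) : ℚ) * (M i k : ℚ))]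
      calc (∑ i : Fin (j+1), ((if h : (i:ℕ) < j + 1 then z ⟨i, h⟩ else 0 : ℤ) : ℚ) * (M (i:ℕ) k : ℚ))
          = ∑ i : Fin (j+1), (a i * D) * (M (i:ℕ) k : ℚ) := by
            refine Finset.sum_congr rfl fun i _ => ?_
            rw [dif_pos i.isLt]
            congr 1
            rw [← hz i]
        _ = D * ∑ i : Fin (j+1), (M (i:ℕ) k : ℚ) * a i := by
            rw [Finset.mul_sum]
            refine Finset.sum_congr rfl fun i _ => by ring
        _ = 0 := by rw [hcol', mul_zero]
    exact_mod_cast hcast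

open Cardinal

theorem stmt_5 (H : AddSubgroup (ℕ → ℤ)) (hH : Module.rank ℤ H = ℵ₀) :
    ∃ (f : (ℕ → ℤ) →+ (ℕ → ℤ)) (d : ℕ → ℕ), (∀ n, 0 < d n) ∧
      ∀ x : ℕ → ℤ, (Function.support x).Finite → (∀ n, (d n : ℤ) ∣ x n) →
        x ∈ H.map f := by
  classical
  -- Step 1: for every m there is a nonzero element of H vanishing on the first m coordinates
  have A : ∀ m : ℕ, ∃ h : ℕ → ℤ, h ∈ H ∧ h ≠ 0 ∧ ∀ i < m, h i = 0 := by
    intro m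
    by_contra hc
    push_neg at hc
    set L : H →ₗ[ℤ] (Fin m → ℤ) :=
      { toFun := fun h i => (h : ℕ → ℤ) (i : ℕ)
        map_add' := by intros; rfl
        map_smul' := by intros; rfl } with hL
    have hinj : Function.Injective L := by
      intro a b hab
      by_contra hne
      have hsub : ((a - b : H) : ℕ → ℤ) ∈ H := (a - b).2
      have hne2 : ((a - b : H) : ℕ → ℤ) ≠ 0 := by
        intro h0
        exact hne (Subtype.ext (by
          have := sub_eq_zero.mp h0
          exact_mod_cast this))
      obtain ⟨i, him, hi0⟩ := hc _ hsub hne2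
      have : (a:ℕ→ℤ) i - (b:ℕ→ℤ) i = 0 := by
        have := congrFun hab ⟨i, him⟩
        simpa [hL, sub_eq_zero] using sub_eq_zero.mpr this
      exact hi0 (by simpa using this)
    have hle := LinearMap.rank_le_of_injective L hinj
    rw [hH, rank_fin_fun] at hle
    exact absurd hle (by simp [Cardinal.nat_lt_aleph0 m |>.not_ge])
  choose u humem hune huz using A
  -- least nonzero coordinate of u m
  have hex : ∀ m, ∃ i, u m i ≠ 0 := fun m => Function.ne_iff.mp (hune m)
  set ν : ℕ → ℕ := fun m => Nat.find (hex m) with hν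
  have hνne : ∀ m, u m (ν m) ≠ 0 := fun m => Nat.find_spec (hex m)
  have hνge : ∀ m, m ≤ ν m := by
    intro m
    by_contra h
    exact hνne m (huz m _ (lt_of_not_ge h))
  -- the coordinate sequence
  set N : ℕ → ℕ := fun k => Nat.rec 0 (fun _ p => ν p + 1) k with hN
  set n : ℕ → ℕ := fun k => ν (N k) with hn
  set U : ℕ → (ℕ → ℤ) := fun k => u (N k) with hU
  have hNsucc : ∀ k, N (k+1) = n k + 1 := fun k => rfl
  have hnN : ∀ k, N k ≤ n k := fun k => hνge (N k)
  have hlt : ∀ k, ∀ i < k, n i < N k := by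
    intro k
    induction k with
    | zero => intro i hi; omega
    | succ k ih =>
      intro i hi
      rcases Nat.lt_succ_iff_lt_or_eq.mp hi with h | h
      · exact lt_of_lt_of_le (lt_of_lt_of_le (ih i h) (hnN k)) (by rw [hNsucc]; omega)
      · subst h; rw [hNsucc]; omega
  -- the matrix
  set M : ℕ → ℕ → ℤ := fun i k => U k (n i) with hM
  have hMtri : ∀ i k, i < k → M i k = 0 := by
    intro i k hik
    exact huz (N k) (n i) (hlt k i hik)
  have hMdiag : ∀ k, M k k ≠ 0 := fun k => hνne (N k)
  -- rows
  have horth : ∀ j : ℕ, ∃ b : ℕ → ℤ, b j ≠ 0 ∧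
      ∀ k < j, ∑ i ∈ Finset.range (j+1), b i * M i k = 0 :=
    fun j => exists_orth j M (fun i k _ hik => hMtri i k hik) (fun k _ => hMdiag k)
  choose b hbj hborth using horth
  -- the diagonal entries
  set e : ℕ → ℤ := fun j => ∑ i ∈ Finset.range (j+1), b j i * M i j with he
  have heval : ∀ j, e j = b j j * M j j := by
    intro j
    show (∑ i ∈ Finset.range (j+1), b j i * M i j) = b j j * M j j
    rw [Finset.sum_eq_single j]
    · intro i hi hij
      have : i < j := by
        have := Finset.mem_range.mp hi; omega
      rw [hMtri i j this, mul_zero]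
    · intro h; exact absurd (Finset.self_mem_range_succ j) h
  have hene : ∀ j, e j ≠ 0 := by
    intro j
    rw [heval]
    exact mul_ne_zero (hbj j) (hMdiag j)
  -- the endomorphism
  set f : (ℕ → ℤ) →+ (ℕ → ℤ) :=
    { toFun := fun x j => ∑ i ∈ Finset.range (j+1), b j i * x (n i)
      map_zero' := by funext j; simp
      map_add' := by
        intro x y
        funext j
        simp [Pi.add_apply, mul_add, Finset.sum_add_distrib] } with hf
  refine ⟨f, fun j => (e j).natAbs, fun j => Int.natAbs_pos.mpr (hene j), ?_⟩
  intro x hfin hdvd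
  -- bound the support
  obtain ⟨m, hm⟩ : ∃ m, ∀ i, x i ≠ 0 → i < m := by
    obtain ⟨m, hm⟩ := hfin.bddAbove
    exact ⟨m + 1, fun i hi => Nat.lt_succ_of_le (hm hi)⟩
  -- coefficients
  have hcoef : ∀ j, ∃ c : ℤ, c * e j = x j := by
    intro j
    have : e j ∣ x j := (Int.natAbs_dvd).mp (hdvd j)
    obtain ⟨c, hc⟩ := this
    exact ⟨c, by rw [hc]; ring⟩
  choose c hc using hcoef
  refine ⟨∑ k ∈ Finset.range m, c k • U k, ?_, ?_⟩
  · exact AddSubgroup.sum_mem H fun k _ => AddSubgroup.zsmul_mem H (humem (N k)) (c k)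
  · funext j
    have happ : f (∑ k ∈ Finset.range m, c k • U k) j
        = ∑ i ∈ Finset.range (j+1), b j i * (∑ k ∈ Finset.range m, c k * U k (n i)) := by
      rw [hf]
      simp only [AddMonoidHom.coe_mk, ZeroHom.coe_mk]
      refine Finset.sum_congr rfl fun i _ => ?_
      congr 1
      simp [Finset.sum_apply, smul_eq_mul]
    rw [happ]
    have hswap : ∑ i ∈ Finset.range (j+1), b j i * (∑ k ∈ Finset.range m, c k * U k (n i))
        = ∑ k ∈ Finset.range m, c k * (∑ i ∈ Finset.range (j+1), b j i * M i k) := by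
      simp_rw [Finset.mul_sum]
      rw [Finset.sum_comm]
      refine Finset.sum_congr rfl fun k _ => ?_
      refine Finset.sum_congr rfl fun i _ => ?_
      simp only [hM, hU]
      ring
    rw [hswap]
    by_cases hjm : j < m
    · rw [Finset.sum_eq_single j]
      · exact hc j
      · intro k hk hkj
        rcases lt_or_gt_of_ne hkj with h | h
        · rw [hborth j k h, mul_zero]
        · have : ∑ i ∈ Finset.range (j+1), b j i * M i k = 0 := by
            refine Finset.sum_eq_zero fun i hi => ?_
            have : i < k := by have := Finset.mem_range.mp hi; omega
            rw [hMtri i k this, mul_zero]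
          rw [this, mul_zero]
      · intro h; exact absurd (Finset.mem_range.mpr hjm) h
    · have hx0 : x j = 0 := by
        by_contra h
        exact hjm (hm j h)
      rw [hx0]
      refine Finset.sum_eq_zero fun k hk => ?_
      have hkj : k < j := lt_of_lt_of_le (Finset.mem_range.mp hk) (le_of_not_gt hjm)
      rw [hborth j k hkj, mul_zero]
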